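/- Let φ = (1 + √5)/2 be the golden ratio, and let Z be the two-point random variable with Pr{Z = φ} = 1/(√5 · φ) and Pr{Z = −1/φ} = φ/√5. Then E[Z] = 0, E[Z^k] ≥ 1 for every integer k ≥ 2, and U_Z − L_Z = √5, where L_Z = sup{ u ∈ ℝ : Pr{Z ≥ u} = 1 } and U_Z = inf{ v ∈ ℝ : Pr{Z ≤ v} = 1 }. -/

import Mathlib

open MeasureTheory ProbabilityTheory

/-- The two-point random variable `Z` with `Pr{Z = φ} = 1/(√5 φ)` and
`Pr{Z = -1/φ} = φ/√5`, where `φ = (1+√5)/2` is the golden ratio, has mean zero,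
satisfies `E[Z^k] ≥ 1` for all integers `k ≥ 2`, and its essential supremum minus
its essential infimum equals `√5`. -/
theorem statement5 {Ω : Type*} [MeasurableSpace Ω] (μ : Measure Ω) [IsProbabilityMeasure μ]
    (φ : ℝ) (hφ : φ = (1 + Real.sqrt 5) / 2)
    (Z : Ω → ℝ) (hZm : Measurable Z)
    (h1 : μ {ω | Z ω = φ} = ENNReal.ofReal (1 / (Real.sqrt 5 * φ)))
    (h2 : μ {ω | Z ω = -(1 / φ)} = ENNReal.ofReal (φ / Real.sqrt 5)) :
    (∫ ω, Z ω ∂μ) = 0 ∧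
    (∀ k : ℕ, 2 ≤ k → 1 ≤ ∫ ω, (Z ω) ^ k ∂μ) ∧
    sInf { v : ℝ | μ {ω | Z ω ≤ v} = 1 } - sSup { u : ℝ | μ {ω | u ≤ Z ω} = 1 }
      = Real.sqrt 5 := by
  have h5 : Real.sqrt 5 ^ 2 = 5 := Real.sq_sqrt (by norm_num)
  have h5pos : (0:ℝ) < Real.sqrt 5 := Real.sqrt_pos.mpr (by norm_num)
  have hφpos : 0 < φ := by rw [hφ]; positivity
  have hφne : φ ≠ 0 := ne_of_gt hφpos
  set b : ℝ := -(1/φ) with hbdef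
  have hbφ : b * φ = -1 := by rw [hbdef]; field_simp
  have hbneg : b < 0 := by
    rw [hbdef]
    simp only [neg_neg, neg_lt, neg_zero]
    positivity
  set pA : ℝ := 1 / (Real.sqrt 5 * φ) with hpAdef
  set pB : ℝ := φ / Real.sqrt 5 with hpBdef
  have hpApos : 0 < pA := by positivity
  have hpBpos : 0 < pB := by positivity
  have hsum : pA + pB = 1 := by
    rw [hpAdef, hpBdef, hφ]
    field_simp
    nlinarith [h5, h5pos]
  set A : Set Ω := {ω | Z ω = φ} with hAdef
  set B : Set Ω := {ω | Z ω = b} with hBdef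
  have hA : MeasurableSet A := hZm (measurableSet_singleton φ)
  have hB : MeasurableSet B := hZm (measurableSet_singleton b)
  have hne : φ ≠ b := by linarith
  have hdisj : Disjoint A B := by
    rw [Set.disjoint_left]
    intro ω hωA hωB
    exact hne (hωA.symm.trans hωB)
  have hμA : μ A = ENNReal.ofReal pA := h1
  have hμB : μ B = ENNReal.ofReal pB := h2
  have hμAB : μ (A ∪ B) = 1 := by
    rw [measure_union hdisj hB, hμA, hμB, ← ENNReal.ofReal_add hpApos.le hpBpos.le, hsum]
    simp
  have hcompl : μ (A ∪ B)ᶜ = 0 := by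
    rw [measure_compl (hA.union hB) (measure_ne_top μ _), hμAB, measure_univ, tsub_self]
  have hae : ∀ᵐ ω ∂μ, Z ω = φ ∨ Z ω = b := by
    have hset : {ω | ¬(Z ω = φ ∨ Z ω = b)} = (A ∪ B)ᶜ := by
      ext ω
      simp [hAdef, hBdef, not_or]
    rw [ae_iff, hset]
    exact hcompl
  have hmul : φ * ((Real.sqrt 5 - 1)/2) = 1 := by
    linear_combination ((Real.sqrt 5 - 1)/2) * hφ + (1/4) * h5
  have hmul' : ((Real.sqrt 5 - 1)/2) * φ = 1 := by linear_combination hmul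
  have hinv : 1/φ = (Real.sqrt 5 - 1)/2 := (eq_one_div_of_mul_eq_one_right hmul).symm
  have hAtoReal : (μ A).toReal = pA := by rw [hμA, ENNReal.toReal_ofReal hpApos.le]
  have key : ∀ g : ℝ → ℝ, ∫ ω, g (Z ω) ∂μ = g φ * pA + g b * pB := by
    intro g
    have hcong : (fun ω => g (Z ω)) =ᵐ[μ]
        fun ω => g b + Set.indicator A (fun _ => g φ - g b) ω := by
      filter_upwards [hae] with ω hω
      rcases hω with h | h
      · have hmem : ω ∈ A := h
        rw [Set.indicator_of_mem hmem, h]; ring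
      · have hmem : ω ∉ A := by
          intro hc
          exact hne ((show Z ω = φ from hc).symm.trans h)
        rw [Set.indicator_of_notMem hmem, h]; ring
    rw [integral_congr_ae hcong,
      integral_add (integrable_const _) ((integrable_const _).indicator hA),
      integral_const, integral_indicator_const _ hA]
    simp only [measureReal_def]
    rw [hAtoReal, measure_univ]
    have hpB1 : pB = 1 - pA := by linarith
    rw [hpB1]; simp; ring
  refine ⟨?_, ?_, ?_⟩
  · have hk := key (fun x => x)
    rw [hk, hbdef, hpAdef, hpBdef]
    field_simp
    ring
  · intro k hk2
    obtain ⟨n, rfl⟩ : ∃ n, k = n + 2 := ⟨k - 2, by omega⟩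
    have hk := key (fun x => x ^ (n + 2))
    rw [hk]
    have hpA2 : pA = -b / Real.sqrt 5 := by
      rw [hpAdef, hbdef]
      field_simp
    have hfib : φ ^ (n + 2) * pA + b ^ (n + 2) * pB
        = ((Nat.fib (n + 1) : ℝ)) := by
      rw [Real.coe_fib_eq]
      have hgr : Real.goldenRatio = φ := by rw [hφ]
      have hgc : Real.goldenConj = b := by
        rw [hbdef, hinv]
        show (1 - Real.sqrt 5)/2 = -((Real.sqrt 5 - 1)/2)
        ring
      rw [hgr, hgc, hpA2, hpBdef]
      rw [pow_succ φ (n+1), pow_succ b (n+1)]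
      linear_combination ((b ^ (n+1) - φ ^ (n+1)) / Real.sqrt 5) * hbφ
    rw [hfib]
    exact_mod_cast Nat.fib_pos.mpr n.succ_pos
  · have hS : { v : ℝ | μ {ω | Z ω ≤ v} = 1 } = Set.Ici φ := by
      ext v
      simp only [Set.mem_setOf_eq, Set.mem_Ici]
      constructor
      · intro hv
        by_contra hlt
        push_neg at hlt
        have hsub : A ⊆ {ω | Z ω ≤ v}ᶜ := by
          intro ω hω
          simp only [Set.mem_compl_iff, Set.mem_setOf_eq, not_le]
          rw [show Z ω = φ from hω]
          exact hlt
        have hc : μ {ω | Z ω ≤ v}ᶜ = 0 := by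
          have hms : MeasurableSet {ω | Z ω ≤ v} :=
            measurableSet_le hZm measurable_const
          rw [measure_compl hms (measure_ne_top μ _), hv, measure_univ, tsub_self]
        have hA0 : μ A = 0 := measure_mono_null hsub hc
        rw [hμA] at hA0
        exact absurd hA0 (by simp [ENNReal.ofReal_eq_zero, not_le, hpApos])
      · intro hv
        refine le_antisymm prob_le_one ?_
        rw [← hμAB]
        apply measure_mono
        rintro ω (hω | hω) <;> simp only [Set.mem_setOf_eq]
        · rw [show Z ω = φ from hω]; exact hv
        · rw [show Z ω = b from hω]; linarith
    have hT : { u : ℝ | μ {ω | u ≤ Z ω} = 1 } = Set.Iic b := by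
      ext u
      simp only [Set.mem_setOf_eq, Set.mem_Iic]
      constructor
      · intro hu
        by_contra hlt
        push_neg at hlt
        have hsub : B ⊆ {ω | u ≤ Z ω}ᶜ := by
          intro ω hω
          simp only [Set.mem_compl_iff, Set.mem_setOf_eq, not_le]
          rw [show Z ω = b from hω]
          exact hlt
        have hc : μ {ω | u ≤ Z ω}ᶜ = 0 := by
          have hms : MeasurableSet {ω | u ≤ Z ω} :=
            measurableSet_le measurable_const hZm
          rw [measure_compl hms (measure_ne_top μ _), hu, measure_univ, tsub_self]
        have hB0 : μ B = 0 := measure_mono_null hsub hc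
        rw [hμB] at hB0
        exact absurd hB0 (by simp [ENNReal.ofReal_eq_zero, not_le, hpBpos])
      · intro hu
        refine le_antisymm prob_le_one ?_
        rw [← hμAB]
        apply measure_mono
        rintro ω (hω | hω) <;> simp only [Set.mem_setOf_eq]
        · rw [show Z ω = φ from hω]; linarith
        · rw [show Z ω = b from hω]; exact hu
    rw [hS, hT, csInf_Ici, csSup_Iic, hbdef]
    linear_combination hφ + hinv
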